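/- Let α ∈ 𝕋 = ℝ/ℤ be irrational and not badly approximable, i.e., there is a sequence of positive integers q_k → ∞ with q_k·⟨α q_k⟩ → 0. Then for the skew-shift T(ω₁,ω₂) = (ω₁ + 2α, ω₁ + ω₂) on 𝕋², every point (ω₁,ω₂) ∈ 𝕋² has a forward orbit {T^k(ω₁,ω₂)}_{k≥0} with the repetition property; that is, (𝕋²,T) satisfies (GRP). -/

import Mathlib

open Filter Topology MeasureTheory

/-- A sequence in a metric space has the repetition property if for every `ε > 0` and
`r > 0` there is a positive integer `q` such that `dist (u k) (u (k+q)) < ε` for all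
`k = 0, 1, …, ⌊r * q⌋`. -/
def RepetitionProperty {Ω : Type*} [PseudoMetricSpace Ω] (u : ℕ → Ω) : Prop :=
  ∀ ε > (0 : ℝ), ∀ r > (0 : ℝ), ∃ q : ℕ, 0 < q ∧
    ∀ k : ℕ, k ≤ ⌊r * q⌋₊ → dist (u k) (u (k + q)) < ε

/-- `PRP T` is the set of points whose forward orbit under `T` has the repetition
property. -/
def PRP {Ω : Type*} [PseudoMetricSpace Ω] (T : Ω → Ω) : Set Ω :=
  { ω | RepetitionProperty fun k => T^[k] ω }

/-- The skew-shift `T (ω₁, ω₂) = (ω₁ + 2α, ω₁ + ω₂)` on the two-dimensional torus. -/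
noncomputable def skewShift (α : UnitAddCircle) :
    UnitAddCircle × UnitAddCircle → UnitAddCircle × UnitAddCircle :=
  fun p => (p.1 + 2 • α, p.1 + p.2)

/-- `α ∈ 𝕋` is badly approximable if `⟨αq⟩ > c / q` for some `c > 0` and all `q ≠ 0`. -/
def BadlyApproximable (α : UnitAddCircle) : Prop :=
  ∃ c > (0 : ℝ), ∀ q : ℤ, q ≠ 0 → c / |(q : ℝ)| < ‖q • α‖

lemma unitAddCircle_norm_coe_le (y : ℝ) : ‖(y : UnitAddCircle)‖ ≤ |y| := by
  simpa [Real.norm_eq_abs] using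
    QuotientAddGroup.norm_mk_le_norm (S := AddSubgroup.zmultiples (1 : ℝ)) (m := y)

lemma exists_nsmul_norm_le (x : UnitAddCircle) {n : ℕ} (hn : 0 < n) :
    ∃ j : ℕ, 0 < j ∧ j ≤ n ∧ ‖j • x‖ ≤ 1 / (n + 1) := by
  induction x using QuotientAddGroup.induction_on with
  | H ξ =>
    obtain ⟨i, k, hk0, hkn, h⟩ := Real.exists_int_int_abs_mul_sub_le ξ hn
    refine ⟨k.toNat, by omega, by omega, ?_⟩
    have hk' : ((k.toNat : ℕ) : ℝ) = (k : ℝ) := by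
      exact_mod_cast congrArg (Int.cast : ℤ → ℝ) (Int.toNat_of_nonneg hk0.le)
    have e0 : ((i : ℝ) : UnitAddCircle) = 0 := by
      rw [AddCircle.coe_eq_zero_iff]; exact ⟨i, by simp⟩
    have e1 : (k.toNat : ℕ) • ((ξ : ℝ) : UnitAddCircle)
        = (((k : ℝ) * ξ - i : ℝ) : UnitAddCircle) := by
      rw [← AddCircle.coe_nsmul, AddCircle.coe_sub, e0, sub_zero, nsmul_eq_mul, hk']
    rw [e1]
    exact (unitAddCircle_norm_coe_le _).trans h

lemma nat_id (k Q : ℕ) :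
    (k + Q) * ((k + Q) - 1) = k * (k - 1) + (2 * k * Q + Q * (Q - 1)) := by
  cases k <;> cases Q <;> simp [Nat.succ_sub_one] <;> ring

lemma skewShift_iterate (α ω₁ ω₂ : UnitAddCircle) (k : ℕ) :
    (skewShift α)^[k] (ω₁, ω₂)
      = (ω₁ + (2 * k) • α, ω₂ + k • ω₁ + (k * (k - 1)) • α) := by
  induction k with
  | zero => simp
  | succ n ih =>
    rw [Function.iterate_succ_apply', ih]
    have h1 : (n + 1) * ((n + 1) - 1) = n * (n - 1) + 2 * n := by
      cases n <;> simp [Nat.succ_sub_one] <;> ring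
    simp only [skewShift, Prod.mk.injEq]
    constructor
    · rw [add_assoc, ← add_nsmul]
      ring_nf
    · rw [h1, add_nsmul, succ_nsmul, add_nsmul]
      abel

set_option maxHeartbeats 1000000 in
/-- If `α` is irrational and not badly approximable (there are positive integers
`q k → ∞` with `q k * ⟨α * q k⟩ → 0`), then the skew-shift on `𝕋²` satisfies (GRP). -/
theorem skewShift_GRP_of_not_badlyApproximable (α : UnitAddCircle)
    (hirr : ∀ n : ℤ, n ≠ 0 → n • α ≠ 0)
    (hna : ∃ q : ℕ → ℕ, (∀ k, 0 < q k) ∧ Tendsto q atTop atTop ∧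
      Tendsto (fun k => (q k : ℝ) * ‖(q k : ℤ) • α‖) atTop (𝓝 0)) :
    ∀ p : UnitAddCircle × UnitAddCircle, p ∈ PRP (skewShift α) := by
  rintro ⟨ω₁, ω₂⟩ ε hε r hr
  obtain ⟨q, hqpos, -, hq0⟩ := hna
  set M : ℕ := ⌈3 / ε⌉₊ + 1 with hM
  have hM1 : (1 : ℝ) ≤ (M : ℝ) := by
    have : 1 ≤ M := by omega
    exact_mod_cast this
  have hMε : 1 / ((M : ℝ) + 1) < ε / 3 := by
    have hceil : 3 / ε ≤ (⌈3 / ε⌉₊ : ℝ) := Nat.le_ceil _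
    have h2 : 3 / ε < (M : ℝ) + 1 := by
      rw [hM]; push_cast; linarith
    rw [div_lt_iff₀ hε] at h2
    rw [div_lt_div_iff₀ (by linarith) (by norm_num)]
    linarith
  set B : ℝ := 3 * (2 * r + 2) * (M : ℝ) ^ 2 with hB
  have hBpos : 0 < B := by positivity
  have hδ : 0 < ε / B := by positivity
  obtain ⟨n, hsmall⟩ := (hq0.eventually (gt_mem_nhds hδ)).exists
  set q₀ : ℕ := q n with hq₀
  have hq₀p : 0 < q₀ := hqpos n
  set a : ℝ := ‖(q₀ : ℕ) • α‖ with ha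
  have ha0 : 0 ≤ a := norm_nonneg _
  have hq1 : (1 : ℝ) ≤ (q₀ : ℝ) := by exact_mod_cast hq₀p
  have hqa : (q₀ : ℝ) * a < ε / B := by
    simpa [ha, natCast_zsmul] using hsmall
  -- the master bound
  have hmain : ∀ c : ℝ, 0 ≤ c → c ≤ (2 * r + 2) * (M : ℝ) ^ 2 → c * ((q₀ : ℝ) * a) < ε / 3 := by
    intro c hc0 hc
    have hqann : 0 ≤ (q₀ : ℝ) * a := by positivity
    have h1 : c * ((q₀ : ℝ) * a) ≤ ((2 * r + 2) * (M : ℝ) ^ 2) * ((q₀ : ℝ) * a) :=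
      mul_le_mul_of_nonneg_right hc hqann
    have h2 : ((2 * r + 2) * (M : ℝ) ^ 2) * ((q₀ : ℝ) * a)
        < ((2 * r + 2) * (M : ℝ) ^ 2) * (ε / B) :=
      mul_lt_mul_of_pos_left hqa (by positivity)
    have h3 : ((2 * r + 2) * (M : ℝ) ^ 2) * (ε / B) = ε / 3 := by
      rw [hB]; field_simp
    linarith
  obtain ⟨j, hj0, hjM, hjnorm⟩ := exists_nsmul_norm_le (q₀ • ω₁) (n := M) (by omega)
  have hj1 : (1 : ℝ) ≤ (j : ℝ) := by exact_mod_cast hj0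
  have hjMr : (j : ℝ) ≤ (M : ℝ) := by exact_mod_cast hjM
  refine ⟨j * q₀, by positivity, fun k hk => ?_⟩
  set Q : ℕ := j * q₀ with hQ
  have hkr : (k : ℝ) ≤ r * Q := by
    calc (k : ℝ) ≤ (⌊r * Q⌋₊ : ℝ) := by exact_mod_cast hk
    _ ≤ r * Q := Nat.floor_le (by positivity)
  have hQr : (Q : ℝ) = (j : ℝ) * (q₀ : ℝ) := by rw [hQ]; push_cast; ring
  have key : ∀ m : ℕ, ‖(m * q₀) • α‖ ≤ (m : ℝ) * a := by
    intro m
    rw [mul_nsmul']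
    exact norm_nsmul_le
  simp only [skewShift_iterate]
  rw [Prod.dist_eq, max_lt_iff]
  constructor
  · -- first coordinate
    rw [dist_add_left, dist_eq_norm]
    have e : (2 * (k + Q)) • α = (2 * k) • α + ((2 * j) * q₀) • α := by
      rw [← add_nsmul]; congr 1; rw [hQ]; ring
    rw [e, sub_add_eq_sub_sub, sub_self, zero_sub, norm_neg]
    calc ‖((2 * j) * q₀) • α‖ ≤ (2 * (j : ℝ)) * a := by
          simpa using key (2 * j)
      _ = (2 * (j : ℝ) / (q₀ : ℝ)) * ((q₀ : ℝ) * a) := by field_simp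
      _ < ε / 3 := by
          apply hmain _ (by positivity)
          rw [div_le_iff₀ (by linarith)]
          nlinarith
      _ < ε := by linarith
  · -- second coordinate
    have e2 : ω₂ + (k + Q) • ω₁ + ((k + Q) * ((k + Q) - 1)) • α
        = (ω₂ + k • ω₁ + (k * (k - 1)) • α)
          + (Q • ω₁ + ((2 * k * Q) • α + (Q * (Q - 1)) • α)) := by
      simp only [nat_id, add_nsmul]
      abel
    rw [dist_eq_norm, e2, sub_add_eq_sub_sub, sub_self, zero_sub, norm_neg]
    have hQsm : Q • ω₁ = j • (q₀ • ω₁) := mul_nsmul' _ _ _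
    have b1 : ‖Q • ω₁‖ < ε / 3 := by
      rw [hQsm]
      exact lt_of_le_of_lt hjnorm hMε
    have b2 : ‖(2 * k * Q) • α‖ < ε / 3 := by
      have e3 : 2 * k * Q = (2 * k * j) * q₀ := by rw [hQ]; ring
      rw [e3]
      refine lt_of_le_of_lt (key _) ?_
      have : ((2 * k * j : ℕ) : ℝ) * a = (2 * (k : ℝ) * (j : ℝ) / (q₀ : ℝ)) * ((q₀ : ℝ) * a) := by
        push_cast; field_simp
      rw [this]
      apply hmain _ (by positivity)
      rw [div_le_iff₀ (by linarith)]
      have hk' : (k : ℝ) ≤ r * ((j : ℝ) * (q₀ : ℝ)) := by rw [← hQr]; exact hkr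
      have hjj : (j : ℝ) * (j : ℝ) ≤ (M : ℝ) ^ 2 := by nlinarith
      have h1 : (k : ℝ) * (j : ℝ) ≤ r * ((j : ℝ) * (q₀ : ℝ)) * (j : ℝ) :=
        mul_le_mul_of_nonneg_right hk' (by positivity)
      have h2 : r * ((j : ℝ) * (j : ℝ) * (q₀ : ℝ)) ≤ r * ((M : ℝ) ^ 2 * (q₀ : ℝ)) := by
        apply mul_le_mul_of_nonneg_left _ hr.le
        exact mul_le_mul_of_nonneg_right hjj (by positivity)
      have h3 : (0 : ℝ) ≤ 2 * (M : ℝ) ^ 2 * (q₀ : ℝ) := by positivity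
      linarith
    have b3 : ‖(Q * (Q - 1)) • α‖ < ε / 3 := by
      have e4 : Q * (Q - 1) = (j * (Q - 1)) * q₀ := by rw [hQ]; ring
      rw [e4]
      refine lt_of_le_of_lt (key _) ?_
      have hQ1 : ((j * (Q - 1) : ℕ) : ℝ) ≤ (j : ℝ) * (Q : ℝ) := by
        have : j * (Q - 1) ≤ j * Q := Nat.mul_le_mul_left _ (Nat.sub_le _ _)
        calc ((j * (Q - 1) : ℕ) : ℝ) ≤ ((j * Q : ℕ) : ℝ) := by exact_mod_cast this
        _ = (j : ℝ) * (Q : ℝ) := by push_cast; ring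
      have h5 : ((j * (Q - 1) : ℕ) : ℝ) * a ≤ ((j : ℝ) * (j : ℝ)) * ((q₀ : ℝ) * a) := by
        rw [hQr] at hQ1
        nlinarith [mul_le_mul_of_nonneg_right hQ1 ha0]
      refine lt_of_le_of_lt h5 ?_
      apply hmain _ (by positivity)
      have hjj : (j : ℝ) * (j : ℝ) ≤ (M : ℝ) ^ 2 := by nlinarith
      nlinarith [sq_nonneg (M : ℝ)]
    calc ‖Q • ω₁ + ((2 * k * Q) • α + (Q * (Q - 1)) • α)‖
        ≤ ‖Q • ω₁‖ + (‖(2 * k * Q) • α‖ + ‖(Q * (Q - 1)) • α‖) :=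
          (norm_add_le _ _).trans (by gcongr; exact norm_add_le _ _)
      _ < ε / 3 + (ε / 3 + ε / 3) := by gcongr <;> linarith
      _ = ε := by ring
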